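/- In any algebra (S,*,') satisfying the three axioms, every element x is a regular element with x' as an inverse: x * x' * x = x and x' * x * x' = x' (products evaluated with any bracketing, since * is associative). -/
import Mathlib


theorem stmt (S : Type*) (m : S → S → S) (i : S → S)
    (E1 : ∀ x, m (m x (i x)) x = x)
    (E2 : ∀ x y, m (m x (i x)) (m (i y) y) = m (m (i y) y) (m x (i x)))
    (E3 : ∀ x y z, m (m x y) z = m x (m y (i (i z)))) :
    ∀ x, m (m x (i x)) x = x ∧ m (m (i x) x) (i x) = i x := by
  intro x
  refine ⟨E1 x, ?_⟩
  calc m (m (i x) x) (i x)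
      = m (m (m (m (i x) (i (i x))) (i x)) x) (i x) :=
        (congrArg (fun t => m (m t x) (i x)) (E1 (i x))).symm
    _ = m (m (m (i x) (m (i (i x)) (i (i (i x))))) x) (i x) :=
        congrArg (fun t => m (m t x) (i x)) (E3 (i x) (i (i x)) (i x))
    _ = m (m (i x) (m (m (i (i x)) (i (i (i x)))) (i (i x)))) (i x) :=
        congrArg (fun t => m t (i x)) (E3 (i x) (m (i (i x)) (i (i (i x)))) x)
    _ = m (m (i x) (i (i x))) (i x) :=
        congrArg (fun t => m (m (i x) t) (i x)) (E1 (i (i x)))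
    _ = i x := E1 (i x)
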